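/- Acyclicity of the union of leading simple paths (Lemma on the DAG structure, part 1): Let V be a finite set, E ⊆ V × V, c : V × V → ℕ a cost function, and σ* ∈ V such that every vertex of V is reachable from σ* by an E-walk. Call a simple E-path (pairwise distinct vertices) from σ* to σ leading if its total cost is minimal among all simple E-paths from σ* to σ, and let 𝕋 ⊆ E be the set of edges belonging to at least one leading simple path to some vertex of V. Assume every directed E-cycle (closed E-walk traversing at least one edge) has strictly positive total cost. Then 𝕋 contains no directed cycle: there is no closed walk traversing at least one edge that uses only edges of 𝕋. -/

import Mathlib

/-- The total cost of a walk: the sum of the edge costs along its consecutive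
pairs; the empty sum is `0`. -/
def walkCost {V : Type*} (c : V × V → ℕ) : List V → ℕ
  | [] => 0
  | [_] => 0
  | a :: b :: l => c (a, b) + walkCost c (b :: l)

/-- `l` is an `E`-walk from `x` to `y`: a nonempty sequence starting at `x`,
ending at `y`, all of whose consecutive pairs are edges of `E`. -/
def IsWalkOn {V : Type*} (E : Set (V × V)) (x y : V) (l : List V) : Prop :=
  l ≠ [] ∧ l.head? = some x ∧ l.getLast? = some y ∧ l.Chain' (fun u v => (u, v) ∈ E)

/-- `l` is a leading simple `E`-path from `σ*` to `σ`: a simple path (pairwise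
distinct vertices) of minimal total cost among all simple `E`-paths from `σ*`
to `σ`. -/
def IsLeadingSimplePath {V : Type*} (E : Set (V × V)) (c : V × V → ℕ) (σs σ : V)
    (l : List V) : Prop :=
  IsWalkOn E σs σ l ∧ l.Nodup ∧
    ∀ l' : List V, IsWalkOn E σs σ l' → l'.Nodup → walkCost c l ≤ walkCost c l'

/-- The set `𝕋` of edges belonging to at least one leading simple path from
`σ*` to some vertex. -/
def leadingEdges {V : Type*} (E : Set (V × V)) (c : V × V → ℕ) (σs : V) : Set (V × V) :=
  {e | ∃ (σ : V) (l : List V), IsLeadingSimplePath E c σs σ l ∧ e ∈ l.zip l.tail}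

lemma walkCost_append {V : Type*} (c : V × V → ℕ) (p : List V) (u : V) (s : List V) :
    walkCost c (p ++ u :: s) = walkCost c (p ++ [u]) + walkCost c (u :: s) := by
  induction p with
  | nil => simp [walkCost]
  | cons a p ih =>
    cases p with
    | nil => cases s <;> simp [walkCost]
    | cons b p =>
      simp only [List.cons_append, List.append_eq, walkCost] at ih ⊢
      omega

lemma mem_zip_tail {V : Type*} {l : List V} {u v : V} (h : (u,v) ∈ l.zip l.tail) :
    ∃ p s, l = p ++ u :: v :: s := by
  induction l with
  | nil => simp at h
  | cons a t ih =>
    cases t with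
    | nil => simp at h
    | cons b t =>
      rcases List.mem_cons.1 h with h | h
      · exact ⟨[], t, by simp_all⟩
      · obtain ⟨p, s, hps⟩ := ih h
        exact ⟨a :: p, s, by rw [List.cons_append, ← hps]⟩

lemma exists_dup {V : Type*} {l : List V} (h : ¬ l.Nodup) :
    ∃ (v:V) (p q r : List V), l = p ++ v :: q ++ v :: r := by
  induction l with
  | nil => simp at h
  | cons a t ih =>
    by_cases ha : a ∈ t
    · obtain ⟨q, r, rfl⟩ := List.append_of_mem ha
      exact ⟨a, [], q, r, rfl⟩
    · have : ¬ t.Nodup := by simp [List.nodup_cons, ha] at h; exact h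
      obtain ⟨v,p,q,r,rfl⟩ := ih this
      exact ⟨v, a::p, q, r, rfl⟩

lemma exists_nodup_walk {V : Type*} (E : Set (V × V)) (c : V × V → ℕ) :
    ∀ (n : ℕ) (l : List V) (x y : V), l.length ≤ n → IsWalkOn E x y l →
    ∃ l', IsWalkOn E x y l' ∧ l'.Nodup ∧ walkCost c l' ≤ walkCost c l := by
  intro n
  induction n with
  | zero => intro l x y hn h; exact absurd (List.length_eq_zero_iff.1 (Nat.le_zero.1 hn)) h.1
  | succ n ih =>
    intro l x y hn h
    by_cases hnd : l.Nodup
    · exact ⟨l, h, hnd, le_rfl⟩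
    · obtain ⟨v, p, q, r, rfl⟩ := exists_dup hnd
      obtain ⟨hne, hh, hl, hc⟩ := h
      -- the shortened walk
      have hlen : (p ++ v :: r).length ≤ n := by
        simp only [List.length_append, List.length_cons] at hn ⊢; omega
      have e1 : p ++ v :: q ++ v :: r = (p ++ v :: q) ++ (v :: r) := by simp
      have hwalk : IsWalkOn E x y (p ++ v :: r) := by
        refine ⟨by simp, ?_, ?_, ?_⟩
        · cases p with
          | nil => simpa using hh
          | cons a p => simpa using hh
        · rw [e1, List.getLast?_append_of_ne_nil _ (by simp)] at hl
          rw [List.getLast?_append_of_ne_nil _ (by simp : v :: r ≠ [])]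
          exact hl
        · rw [e1, List.Chain', List.isChain_append] at hc
          obtain ⟨hc1, hc2, hc3⟩ := hc
          rw [List.isChain_append] at hc1
          obtain ⟨hp, hvq, hpv⟩ := hc1
          rw [List.Chain', List.isChain_append]
          refine ⟨hp, hc2, ?_⟩
          intro a ha b hb
          have := hpv a ha v (by simp)
          simp only [List.head?_cons, Option.mem_def, Option.some.injEq] at hb
          subst hb
          exact this
      have hcost : walkCost c (p ++ v :: r) ≤ walkCost c (p ++ v :: q ++ v :: r) := by
        rw [show p ++ v :: q ++ v :: r = p ++ v :: (q ++ v :: r) by simp]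
        rw [walkCost_append c p v (q ++ v :: r), walkCost_append c p v r]
        rw [show v :: (q ++ v :: r) = (v :: q) ++ v :: r from rfl]
        rw [walkCost_append c (v :: q) v r]
        omega
      obtain ⟨l', h1, h2, h3⟩ := ih (p ++ v :: r) x y hlen hwalk
      exact ⟨l', h1, h2, h3.trans hcost⟩

/-- A prefix of a leading simple path is a leading simple path. -/
lemma prefix_leading {V : Type*} {E : Set (V × V)} {c : V × V → ℕ} {σs σ : V}
    {p s : List V} {u : V} (h : IsLeadingSimplePath E c σs σ (p ++ u :: s)) :
    IsLeadingSimplePath E c σs u (p ++ [u]) := by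
  obtain ⟨⟨hne, hh, hl, hc⟩, hnd, hmin⟩ := h
  have e1 : p ++ u :: s = (p ++ [u]) ++ s := by simp
  have hchain : List.Chain' (fun a b => (a, b) ∈ E) (p ++ [u]) := by
    rw [e1, List.Chain', List.isChain_append] at hc; exact hc.1
  have hhead : (p ++ [u]).head? = some σs := by
    cases p with
    | nil =>
      simp only [List.nil_append, List.head?_cons] at hh ⊢; exact hh
    | cons a p => simpa using hh
  have hwpu : IsWalkOn E σs u (p ++ [u]) := ⟨by simp, hhead, by simp, hchain⟩
  have hndpu : (p ++ [u]).Nodup := by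
    refine List.Nodup.sublist ?_ hnd
    exact (List.append_sublist_append_left p).2 (by simp)
  refine ⟨hwpu, hndpu, ?_⟩
  intro l' hw' hnd'
  by_contra hlt
  push_neg at hlt
  -- build the concatenated walk l' ++ s
  obtain ⟨hne', hh', hl', hc'⟩ := hw'
  obtain ⟨l'', rfl⟩ : ∃ l'', l' = l'' ++ [u] := by
    rcases List.eq_nil_or_concat l' with h | ⟨l'', a, h⟩
    · exact absurd h hne'
    · rw [List.concat_eq_append] at h
      subst h
      rw [List.getLast?_append_of_ne_nil _ (by simp)] at hl'
      obtain rfl : a = u := by simpa using hl'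
      exact ⟨l'', rfl⟩
  have hwalkw : IsWalkOn E σs σ (l'' ++ u :: s) := by
    refine ⟨by simp, ?_, ?_, ?_⟩
    · cases l'' with
      | nil => simpa using hh'
      | cons a t => simpa using hh'
    · cases s with
      | nil =>
        have : (p ++ [u]).getLast? = some σ := by simpa using hl
        simp only [List.getLast?_concat] at this
        simpa [List.getLast?_concat] using this
      | cons b s =>
        rw [show p ++ u :: b :: s = (p ++ [u]) ++ (b :: s) by simp,
          List.getLast?_append_of_ne_nil _ (by simp)] at hl
        rw [show l'' ++ u :: b :: s = (l'' ++ [u]) ++ (b :: s) by simp,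
          List.getLast?_append_of_ne_nil _ (by simp)]
        exact hl
    · rw [e1, List.Chain', List.isChain_append] at hc
      rw [show l'' ++ u :: s = (l'' ++ [u]) ++ s by simp, List.Chain', List.isChain_append]
      refine ⟨hc', hc.2.1, ?_⟩
      intro a ha b hb
      refine hc.2.2 a ?_ b hb
      rw [List.getLast?_concat] at ha ⊢; exact ha
  obtain ⟨w', hw'', hnd'', hcost''⟩ :=
    exists_nodup_walk E c (l'' ++ u :: s).length (l'' ++ u :: s) σs σ le_rfl hwalkw
  have h1 : walkCost c (p ++ u :: s) ≤ walkCost c w' := hmin w' hw'' hnd''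
  have h2 : walkCost c (l'' ++ u :: s) = walkCost c (l'' ++ [u]) + walkCost c (u :: s) :=
    walkCost_append c l'' u s
  have h3 : walkCost c (p ++ u :: s) = walkCost c (p ++ [u]) + walkCost c (u :: s) :=
    walkCost_append c p u s
  omega

noncomputable def dval {V : Type*} (E : Set (V × V)) (c : V × V → ℕ) (σs u : V) : ℕ :=
  sInf {n | ∃ l, IsWalkOn E σs u l ∧ l.Nodup ∧ walkCost c l = n}

lemma leading_cost_eq_dval {V : Type*} {E : Set (V × V)} {c : V × V → ℕ} {σs u : V}
    {l : List V} (h : IsLeadingSimplePath E c σs u l) : walkCost c l = dval E c σs u := by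
  have hne : {n | ∃ l, IsWalkOn E σs u l ∧ l.Nodup ∧ walkCost c l = n}.Nonempty :=
    ⟨walkCost c l, l, h.1, h.2.1, rfl⟩
  obtain ⟨l₀, hw₀, hnd₀, hcost₀⟩ := Nat.sInf_mem hne
  refine le_antisymm ?_ ?_
  · show walkCost c l ≤ sInf {n | ∃ l, IsWalkOn E σs u l ∧ l.Nodup ∧ walkCost c l = n}
    rw [← hcost₀]; exact h.2.2 l₀ hw₀ hnd₀
  · exact Nat.sInf_le ⟨l, h.1, h.2.1, rfl⟩

lemma edge_dval {V : Type*} {E : Set (V × V)} {c : V × V → ℕ} {σs : V} {u v : V}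
    (h : (u, v) ∈ leadingEdges E c σs) :
    dval E c σs v = dval E c σs u + c (u, v) := by
  obtain ⟨σ, l, hlead, hmem⟩ := h
  obtain ⟨p, s, rfl⟩ := mem_zip_tail hmem
  have h1 : IsLeadingSimplePath E c σs u (p ++ [u]) := prefix_leading hlead
  have h2 : IsLeadingSimplePath E c σs v ((p ++ [u]) ++ [v]) := by
    have := prefix_leading (p := p ++ [u]) (s := s) (u := v) (by simpa using hlead)
    exact this
  have e1 : walkCost c ((p ++ [u]) ++ [v]) = walkCost c (p ++ [u]) + c (u, v) := by
    have := walkCost_append c p u [v]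
    simp only [walkCost] at this
    simpa using this
  rw [← leading_cost_eq_dval h2, ← leading_cost_eq_dval h1, e1]

lemma edge_mem_E {V : Type*} {E : Set (V × V)} {c : V × V → ℕ} {σs : V} {u v : V}
    (h : (u, v) ∈ leadingEdges E c σs) : (u, v) ∈ E := by
  obtain ⟨σ, l, hlead, hmem⟩ := h
  obtain ⟨p, s, rfl⟩ := mem_zip_tail hmem
  have hc := hlead.1.2.2.2
  rw [show p ++ u :: v :: s = p ++ (u :: v :: s) from rfl, List.Chain', List.isChain_append] at hc
  exact (List.isChain_cons_cons.1 hc.2.1).1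

lemma telescope {V : Type*} {E : Set (V × V)} {c : V × V → ℕ} {σs : V} :
    ∀ (l : List V) (x y : V), IsWalkOn (leadingEdges E c σs) x y l →
      dval E c σs x + walkCost c l = dval E c σs y := by
  intro l
  induction l with
  | nil => intro x y h; exact absurd rfl h.1
  | cons a t ih =>
    intro x y h
    obtain ⟨hne, hh, hl, hc⟩ := h
    obtain rfl : a = x := by simpa using hh
    cases t with
    | nil =>
      obtain rfl : a = y := by simpa using hl
      simp [walkCost]
    | cons b t =>
      have hab : (a, b) ∈ leadingEdges E c σs := (List.isChain_cons_cons.1 hc).1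
      have hrest : IsWalkOn (leadingEdges E c σs) b y (b :: t) := by
        refine ⟨by simp, by simp, ?_, (List.isChain_cons_cons.1 hc).2⟩
        rw [List.getLast?_cons_cons] at hl
        exact hl
      have := ih b y hrest
      have hd := edge_dval hab
      simp only [walkCost]
      omega


/-- **Acyclicity of the union of leading simple paths.** If every vertex is
reachable from `σ*` and every directed `E`-cycle (closed walk traversing at
least one edge) has strictly positive total cost, then `𝕋` contains no
directed cycle. -/
theorem leading_edges_acyclic {V : Type*} [Fintype V]
    (E : Set (V × V)) (c : V × V → ℕ) (σs : V)
    (hreach : ∀ σ : V, ∃ l : List V, IsWalkOn E σs σ l)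
    (hcycle : ∀ (x : V) (l : List V), IsWalkOn E x x l → 2 ≤ l.length → 0 < walkCost c l) :
    ¬ ∃ (x : V) (l : List V), IsWalkOn (leadingEdges E c σs) x x l ∧ 2 ≤ l.length := by
  rintro ⟨x, l, hw, hlen⟩
  have h0 : walkCost c l = 0 := by
    have := telescope (E := E) (c := c) (σs := σs) l x x hw
    omega
  have hwE : IsWalkOn E x x l := by
    obtain ⟨h1, h2, h3, h4⟩ := hw
    exact ⟨h1, h2, h3, h4.imp fun a b hab => edge_mem_E hab⟩
  have := hcycle x l hwE hlen
  omega
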